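/- A local domain (D, M), not a field, is an atomic pseudo-valuation domain if and only if it is a pseudo-valuation domain satisfying ACCP (ascending chain condition on principal ideals), and both are equivalent to (M : M) being a discrete valuation ring with maximal ideal M. -/

import Mathlib

set_option linter.unusedSectionVars false



/-- An ideal is 2-absorbing if whenever a product of three elements lies in it,
the product of some two of them lies in it. -/
def IsTwoAbsorbing {R : Type*} [CommRing R] (I : Ideal R) : Prop :=
  ∀ a b c : R, a * b * c ∈ I → a * b ∈ I ∨ a * c ∈ I ∨ b * c ∈ I

/-- A TAF-ring: every proper ideal is a finite product of proper 2-absorbing ideals. -/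
def IsTAFRing (R : Type*) [CommRing R] : Prop :=
  ∀ I : Ideal R, I ≠ ⊤ → ∃ (n : ℕ) (J : Fin n → Ideal R),
    (∀ i, J i ≠ ⊤ ∧ IsTwoAbsorbing (J i)) ∧ I = ∏ i, J i

/-- A pseudo-valuation domain: for x, y in the quotient field outside M, xy is outside M. -/
def IsPVD (D : Type*) [CommRing D] [IsDomain D] [IsLocalRing D] : Prop :=
  ∀ x y : FractionRing D,
    (¬ ∃ m ∈ IsLocalRing.maximalIdeal D, x = algebraMap D (FractionRing D) m) →
    (¬ ∃ m ∈ IsLocalRing.maximalIdeal D, y = algebraMap D (FractionRing D) m) →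
    ¬ ∃ m ∈ IsLocalRing.maximalIdeal D, x * y = algebraMap D (FractionRing D) m

/-- Atomic: every nonzero nonunit is a product of irreducible elements. -/
def IsAtomicDomain (D : Type*) [CommRing D] [IsDomain D] : Prop :=
  ∀ x : D, x ≠ 0 → ¬IsUnit x →
    ∃ l : Multiset D, (∀ a ∈ l, Irreducible a) ∧ Associated l.prod x

/-- ACCP: every ascending chain of principal ideals stabilizes. -/
def HasACCP (D : Type*) [CommRing D] : Prop :=
  ∀ f : ℕ → Ideal D, (∀ n, (f n).IsPrincipal) → (∀ n, f n ≤ f (n + 1)) →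
    ∃ N, ∀ n, N ≤ n → f n = f N

/-- (M : M) is a DVR with maximal ideal M. -/
def MMisDVR (D : Type*) [CommRing D] [IsDomain D] [IsLocalRing D] : Prop :=
  ∃ B : Subring (FractionRing D),
    (∀ x : FractionRing D, x ∈ B ↔ ∀ m ∈ IsLocalRing.maximalIdeal D,
      ∃ m' ∈ IsLocalRing.maximalIdeal D,
        x * algebraMap D (FractionRing D) m = algebraMap D (FractionRing D) m') ∧
    IsDiscreteValuationRing B ∧
    (∀ x : B, ¬ IsUnit x ↔ ∃ m ∈ IsLocalRing.maximalIdeal D,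
      (x : FractionRing D) = algebraMap D (FractionRing D) m)


section Aux

open IsLocalRing

variable {D : Type*} [CommRing D] [IsDomain D] [IsLocalRing D]

/-- The image of the maximal ideal in the fraction field. -/
abbrev InMbar (D : Type*) [CommRing D] [IsDomain D] [IsLocalRing D]
    (x : FractionRing D) : Prop :=
  ∃ m ∈ IsLocalRing.maximalIdeal D, x = algebraMap D (FractionRing D) m

/-- The subring (M : M) of the fraction field. -/
def Bsub (D : Type*) [CommRing D] [IsDomain D] [IsLocalRing D] :
    Subring (FractionRing D) where
  carrier := {x | ∀ m ∈ IsLocalRing.maximalIdeal D, ∃ m' ∈ IsLocalRing.maximalIdeal D,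
    x * algebraMap D (FractionRing D) m = algebraMap D (FractionRing D) m'}
  one_mem' := fun m hm => ⟨m, hm, one_mul _⟩
  mul_mem' := by
    intro x y hx hy m hm
    obtain ⟨m', hm', h'⟩ := hy m hm
    obtain ⟨m'', hm'', h''⟩ := hx m' hm'
    exact ⟨m'', hm'', by rw [mul_assoc, h', h'']⟩
  zero_mem' := fun m hm => ⟨0, Ideal.zero_mem _, by simp⟩
  add_mem' := by
    intro x y hx hy m hm
    obtain ⟨m1, hm1, h1⟩ := hx m hm
    obtain ⟨m2, hm2, h2⟩ := hy m hm
    exact ⟨m1 + m2, Ideal.add_mem _ hm1 hm2, by rw [add_mul, h1, h2, map_add]⟩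
  neg_mem' := by
    intro x hx m hm
    obtain ⟨m1, hm1, h1⟩ := hx m hm
    exact ⟨-m1, neg_mem hm1, by rw [neg_mul, h1, map_neg]⟩

theorem mem_Bsub {x : FractionRing D} :
    x ∈ Bsub D ↔ ∀ m ∈ IsLocalRing.maximalIdeal D, ∃ m' ∈ IsLocalRing.maximalIdeal D,
      x * algebraMap D (FractionRing D) m = algebraMap D (FractionRing D) m' := Iff.rfl

theorem phi_inj : Function.Injective (algebraMap D (FractionRing D)) :=
  IsFractionRing.injective D (FractionRing D)

theorem zero_inMbar : InMbar D 0 := ⟨0, Ideal.zero_mem _, by simp⟩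

theorem ne_zero_of_not_inMbar {x : FractionRing D} (hx : ¬ InMbar D x) : x ≠ 0 :=
  fun h => hx (h ▸ zero_inMbar)

theorem mem_Bsub_of_inMbar {x : FractionRing D} (hx : InMbar D x) : x ∈ Bsub D := by
  obtain ⟨m0, hm0, rfl⟩ := hx
  intro m hm
  exact ⟨m0 * m, Ideal.mul_mem_right _ _ hm0, by rw [map_mul]⟩

theorem algebraMap_mem_Bsub (d : D) : algebraMap D (FractionRing D) d ∈ Bsub D :=
  fun m hm => ⟨d * m, Ideal.mul_mem_left _ _ hm, by rw [map_mul]⟩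

/-- The canonical map `D →+* Bsub D`. -/
noncomputable def psi (D : Type*) [CommRing D] [IsDomain D] [IsLocalRing D] :
    D →+* Bsub D :=
  (algebraMap D (FractionRing D)).codRestrict (Bsub D) algebraMap_mem_Bsub

theorem psi_inj : Function.Injective (psi D) := by
  intro a b h
  exact phi_inj (congrArg Subtype.val h)

theorem coe_psi (d : D) : ((psi D d : Bsub D) : FractionRing D) = algebraMap D (FractionRing D) d :=
  rfl

theorem one_not_mem_max : (1 : D) ∉ IsLocalRing.maximalIdeal D := by
  intro h
  exact (IsLocalRing.maximalIdeal.isMaximal D).ne_top (Ideal.eq_top_of_isUnit_mem _ h isUnit_one)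

end Aux

section PVD

open IsLocalRing

variable {D : Type*} [CommRing D] [IsDomain D] [IsLocalRing D]

theorem inv_mem_Bsub (hP : IsPVD D) {x : FractionRing D} (hx : ¬ InMbar D x) :
    x⁻¹ ∈ Bsub D := by
  intro m hm
  by_cases hxm : InMbar D (x⁻¹ * algebraMap D (FractionRing D) m)
  · obtain ⟨m', hm', e⟩ := hxm
    exact ⟨m', hm', e⟩
  · exfalso
    have hx0 : x ≠ 0 := ne_zero_of_not_inMbar hx
    refine hP x _ hx hxm ⟨m, hm, ?_⟩
    rw [← mul_assoc, mul_inv_cancel₀ hx0, one_mul]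

theorem nonunit_iff_inMbar (hP : IsPVD D) (x : Bsub D) :
    ¬ IsUnit x ↔ InMbar D (x : FractionRing D) := by
  constructor
  · intro hnu
    by_contra hxm
    have hinv := inv_mem_Bsub hP hxm
    have hx0 : (x : FractionRing D) ≠ 0 := ne_zero_of_not_inMbar hxm
    refine hnu (IsUnit.of_mul_eq_one (a := x) ⟨_, hinv⟩ (Subtype.ext ?_))
    push_cast
    exact mul_inv_cancel₀ hx0
  · rintro ⟨m, hm, hxe⟩ hu
    obtain ⟨u, hu'⟩ := hu
    set y : Bsub D := ((u⁻¹ : (Bsub D)ˣ) : Bsub D) with hy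
    obtain ⟨m', hm', he⟩ := y.2 m hm
    have hxy : (x : FractionRing D) * (y : FractionRing D) = 1 := by
      have h1 : (x : Bsub D) * y = 1 := by rw [← hu', hy]; exact_mod_cast u.mul_inv
      exact_mod_cast congrArg (Subtype.val) h1
    have h2 : algebraMap D (FractionRing D) 1 = algebraMap D (FractionRing D) m' := by
      rw [map_one, ← hxy, hxe, mul_comm, he]
    have : (1 : D) = m' := phi_inj h2
    exact one_not_mem_max (this ▸ hm')

theorem exists_factor_of_irreducible (hP : IsPVD D) {a : D} (ha : Irreducible a)
    {x : FractionRing D} (hx : InMbar D x) :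
    ∃ b ∈ Bsub D, x = algebraMap D (FractionRing D) a * b := by
  obtain ⟨m, hm, rfl⟩ := hx
  have ha0 : algebraMap D (FractionRing D) a ≠ 0 := by
    simpa [map_eq_zero_iff _ phi_inj] using ha.ne_zero
  by_cases hm0 : m = 0
  · exact ⟨0, Subring.zero_mem _, by simp [hm0]⟩
  have hφm0 : algebraMap D (FractionRing D) m ≠ 0 := by
    simpa [map_eq_zero_iff _ phi_inj] using hm0
  set t := algebraMap D (FractionRing D) m * (algebraMap D (FractionRing D) a)⁻¹ with hte
  by_cases ht : t ∈ Bsub D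
  · exact ⟨t, ht, by rw [hte, mul_left_comm, mul_inv_cancel₀ ha0, mul_one]⟩
  · exfalso
    have htM : ¬ InMbar D t := fun h => ht (mem_Bsub_of_inMbar h)
    have ht0 : t ≠ 0 := ne_zero_of_not_inMbar htM
    by_cases h2 : InMbar D t⁻¹
    · obtain ⟨m', hm', he⟩ := h2
      have hae : algebraMap D (FractionRing D) a = algebraMap D (FractionRing D) (m' * m) := by
        rw [map_mul, ← he, hte]
        field_simp
      have haeq : a = m' * m := phi_inj hae
      rcases ha.isUnit_or_isUnit haeq with h | h
      · exact ((mem_maximalIdeal _).1 hm') h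
      · exact ((mem_maximalIdeal _).1 hm) h
    · have h3 := inv_mem_Bsub hP h2
      rw [inv_inv] at h3
      exact ht h3

theorem irreducible_psi (hP : IsPVD D) {a : D} (ha : Irreducible a) :
    Irreducible (psi D a) := by
  constructor
  · rw [nonunit_iff_inMbar hP]
    exact ⟨a, (mem_maximalIdeal _).2 ha.not_isUnit, rfl⟩
  · intro y z he
    by_contra hc
    push_neg at hc
    obtain ⟨hy, hz⟩ := hc
    obtain ⟨m1, hm1, he1⟩ := (nonunit_iff_inMbar hP y).1 hy
    obtain ⟨m2, hm2, he2⟩ := (nonunit_iff_inMbar hP z).1 hz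
    have : algebraMap D (FractionRing D) a = algebraMap D (FractionRing D) (m1 * m2) := by
      rw [map_mul, ← he1, ← he2]
      exact congrArg Subtype.val he
    rcases ha.isUnit_or_isUnit (phi_inj this) with h | h
    · exact ((mem_maximalIdeal _).1 hm1) h
    · exact ((mem_maximalIdeal _).1 hm2) h

end PVD

section Atomic

open IsLocalRing

variable {D : Type*} [CommRing D] [IsDomain D] [IsLocalRing D]

theorem exists_irreducible_of_atomic (hA : IsAtomicDomain D) (hnf : ¬ IsField D) :
    ∃ a : D, Irreducible a := by
  have hbot : IsLocalRing.maximalIdeal D ≠ ⊥ :=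
    Ring.ne_bot_of_isMaximal_of_not_isField (IsLocalRing.maximalIdeal.isMaximal D) hnf
  obtain ⟨m, hm, hm0⟩ := Submodule.exists_mem_ne_zero_of_ne_bot hbot
  have hmnu : ¬ IsUnit m := (mem_maximalIdeal _).1 hm
  obtain ⟨l, hl, hassoc⟩ := hA m hm0 hmnu
  rcases Multiset.empty_or_exists_mem l with rfl | ⟨a, hal⟩
  · exfalso
    rw [Multiset.prod_zero] at hassoc
    exact hmnu (associated_one_iff_isUnit.1 hassoc.symm)
  · exact ⟨a, hl a hal⟩

theorem inMbar_coe_psi {m : D} (hm : m ∈ IsLocalRing.maximalIdeal D) :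
    InMbar D ((psi D m : Bsub D) : FractionRing D) := ⟨m, hm, rfl⟩

theorem dvr_Bsub (hP : IsPVD D) (hA : IsAtomicDomain D) (hnf : ¬ IsField D) :
    IsDiscreteValuationRing (Bsub D) := by
  obtain ⟨a, ha⟩ := exists_irreducible_of_atomic hA hnf
  apply IsDiscreteValuationRing.ofHasUnitMulPowIrreducibleFactorization
  refine ⟨psi D a, irreducible_psi hP ha, ?_⟩
  intro x hx0
  by_cases hxu : IsUnit x
  · exact ⟨0, by simpa using (associated_one_iff_isUnit.2 hxu).symm⟩
  obtain ⟨m, hm, he⟩ := (nonunit_iff_inMbar hP x).1 hxu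
  have hxm : x = psi D m := Subtype.ext he
  have hm0 : m ≠ 0 := by
    rintro rfl
    exact hx0 (by simpa using hxm)
  obtain ⟨l, hl, hassoc⟩ := hA m hm0 ((mem_maximalIdeal _).1 hm)
  have key : ∀ b ∈ l, Associated (psi D a) (psi D b) := by
    intro b hb
    have hbirr := hl b hb
    have hbB : Irreducible (psi D b) := irreducible_psi hP hbirr
    obtain ⟨c, hcB, hce⟩ := exists_factor_of_irreducible hP ha
      (inMbar_coe_psi ((mem_maximalIdeal _).2 hbirr.not_isUnit))
    have hdvd : psi D a ∣ psi D b := ⟨⟨c, hcB⟩, Subtype.ext hce⟩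
    exact (irreducible_psi hP ha).associated_of_dvd hbB hdvd
  have hprod : ∀ s : Multiset D, (∀ b ∈ s, Associated (psi D a) (psi D b)) →
      Associated ((psi D a) ^ Multiset.card s) (Multiset.map (psi D) s).prod := by
    intro s
    induction s using Multiset.induction_on with
    | empty => intro _; simp
    | cons b s ih =>
      intro h
      rw [Multiset.map_cons, Multiset.prod_cons, Multiset.card_cons, pow_succ']
      exact Associated.mul_mul (h b (Multiset.mem_cons_self b s))
        (ih fun c hc => h c (Multiset.mem_cons_of_mem hc))
  refine ⟨Multiset.card l, ?_⟩
  have h1 := hprod l key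
  have h2 : Associated ((psi D a) ^ Multiset.card l) (psi D l.prod) := by
    rw [map_multiset_prod]; exact h1
  rw [hxm]
  exact h2.trans (hassoc.map (psi D).toMonoidHom)

theorem mmisdvr_of_pvd_atomic (hP : IsPVD D) (hA : IsAtomicDomain D) (hnf : ¬ IsField D) :
    MMisDVR D :=
  ⟨Bsub D, fun _ => Iff.rfl, dvr_Bsub hP hA hnf, fun x => nonunit_iff_inMbar hP x⟩

end Atomic

section FromDVR

open IsLocalRing

variable {D : Type*} [CommRing D] [IsDomain D] [IsLocalRing D]

theorem dvd_total_of_dvr {B : Type*} [CommRing B] [IsDomain B] [IsDiscreteValuationRing B]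
    (b c : B) (hb : b ≠ 0) (hc : c ≠ 0) : c ∣ b ∨ b ∣ c := by
  obtain ⟨ϖ, hϖ⟩ := IsDiscreteValuationRing.exists_irreducible B
  obtain ⟨n, u, hu⟩ := IsDiscreteValuationRing.eq_unit_mul_pow_irreducible hb hϖ
  obtain ⟨m, v, hv⟩ := IsDiscreteValuationRing.eq_unit_mul_pow_irreducible hc hϖ
  have hbassoc : Associated (ϖ ^ n) b := ⟨u, by rw [hu, mul_comm]⟩
  have hcassoc : Associated (ϖ ^ m) c := ⟨v, by rw [hv, mul_comm]⟩
  rcases le_total m n with h | h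
  · exact Or.inl (hcassoc.symm.dvd.trans ((pow_dvd_pow _ h).trans hbassoc.dvd))
  · exact Or.inr (hbassoc.symm.dvd.trans ((pow_dvd_pow _ h).trans hcassoc.dvd))

variable {B : Subring (FractionRing D)}

theorem algebraMap_mem_B
    (hB1 : ∀ x : FractionRing D, x ∈ B ↔ ∀ m ∈ IsLocalRing.maximalIdeal D,
      ∃ m' ∈ IsLocalRing.maximalIdeal D,
        x * algebraMap D (FractionRing D) m = algebraMap D (FractionRing D) m')
    (d : D) : algebraMap D (FractionRing D) d ∈ B :=
  (hB1 _).2 fun m hm => ⟨d * m, Ideal.mul_mem_left _ _ hm, by rw [map_mul]⟩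

theorem dichotomy_of_dvr
    (hB1 : ∀ x : FractionRing D, x ∈ B ↔ ∀ m ∈ IsLocalRing.maximalIdeal D,
      ∃ m' ∈ IsLocalRing.maximalIdeal D,
        x * algebraMap D (FractionRing D) m = algebraMap D (FractionRing D) m')
    (hDVR : IsDiscreteValuationRing B)
    (hB3 : ∀ x : B, ¬ IsUnit x ↔ ∃ m ∈ IsLocalRing.maximalIdeal D,
      (x : FractionRing D) = algebraMap D (FractionRing D) m)
    {x : FractionRing D} (hx0 : x ≠ 0) :
    InMbar D x ∨ x⁻¹ ∈ B := by
  obtain ⟨d₁, d₂, hd₂, he⟩ := IsFractionRing.div_surjective (A := D) x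
  have hd₂0 : d₂ ≠ 0 := nonZeroDivisors.ne_zero hd₂
  have hφd₂0 : algebraMap D (FractionRing D) d₂ ≠ 0 := fun h => hd₂0 (phi_inj (by simpa using h))
  have hφd₁0 : algebraMap D (FractionRing D) d₁ ≠ 0 := by
    intro h
    rw [h, zero_div] at he
    exact hx0 he.symm
  set b₁ : B := ⟨_, algebraMap_mem_B hB1 d₁⟩ with hb₁
  set b₂ : B := ⟨_, algebraMap_mem_B hB1 d₂⟩ with hb₂
  have hb₁0 : b₁ ≠ 0 := fun h => hφd₁0 (congrArg Subtype.val h)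
  have hb₂0 : b₂ ≠ 0 := fun h => hφd₂0 (congrArg Subtype.val h)
  rcases dvd_total_of_dvr b₁ b₂ hb₁0 hb₂0 with ⟨t, ht⟩ | ⟨t, ht⟩
  · -- b₁ = b₂ * t, so x = t ∈ B
    have hxt : x = (t : FractionRing D) := by
      have h1 : algebraMap D (FractionRing D) d₁ =
          algebraMap D (FractionRing D) d₂ * (t : FractionRing D) := congrArg Subtype.val ht
      rw [← he, h1]
      field_simp
    by_cases htu : IsUnit t
    · right
      obtain ⟨U, hU⟩ := htu
      have h1 : (t : FractionRing D) * ((U⁻¹ : Bˣ) : B) = 1 := by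
        rw [← hU]; exact_mod_cast congrArg Subtype.val U.mul_inv
      have : x⁻¹ = (((U⁻¹ : Bˣ) : B) : FractionRing D) :=
        inv_eq_of_mul_eq_one_right (by rw [hxt]; exact h1)
      rw [this]; exact Subtype.mem _
    · left
      obtain ⟨m, hm, hem⟩ := (hB3 t).1 htu
      exact ⟨m, hm, by rw [hxt, hem]⟩
  · -- b₂ = b₁ * t, so x⁻¹ = t ∈ B
    right
    have hxt : x⁻¹ = (t : FractionRing D) := by
      have h1 : algebraMap D (FractionRing D) d₂ =
          algebraMap D (FractionRing D) d₁ * (t : FractionRing D) := congrArg Subtype.val ht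
      rw [← he]
      rw [div_eq_mul_inv, mul_inv, inv_inv, mul_comm]
      rw [h1]
      field_simp
    rw [hxt]; exact Subtype.mem _

theorem pvd_of_mmisdvr (hC : MMisDVR D) : IsPVD D := by
  obtain ⟨B, hB1, hDVR, hB3⟩ := hC
  intro x y hx hy hxy
  obtain ⟨m, hm, he⟩ := hxy
  have hx0 : x ≠ 0 := ne_zero_of_not_inMbar hx
  have hy0 : y ≠ 0 := ne_zero_of_not_inMbar hy
  have hxinv : x⁻¹ ∈ B := (dichotomy_of_dvr hB1 hDVR hB3 hx0).resolve_left hx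
  have hyinv : y⁻¹ ∈ B := (dichotomy_of_dvr hB1 hDVR hB3 hy0).resolve_left hy
  set z : B := ⟨x * y, he ▸ algebraMap_mem_B hB1 m⟩ with hz
  have hznu : ¬ IsUnit z := (hB3 z).2 ⟨m, hm, he⟩
  apply hznu
  refine IsUnit.of_mul_eq_one (a := z) ⟨x⁻¹ * y⁻¹, Subring.mul_mem _ hxinv hyinv⟩ (Subtype.ext ?_)
  push_cast
  field_simp
  rfl

theorem accp_of_mmisdvr (hC : MMisDVR D) : HasACCP D := by
  obtain ⟨B, hB1, hDVR, hB3⟩ := hC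
  haveI := hDVR
  intro f hprin hmono
  have hmono' : ∀ m n, m ≤ n → f m ≤ f n := fun m n h => by
    induction h with
    | refl => exact le_refl _
    | step _ ih => exact le_trans ih (hmono _)
  set ψ : D →+* B := (algebraMap D (FractionRing D)).codRestrict B (algebraMap_mem_B hB1) with hψ
  have hψinj : Function.Injective ψ := fun a b h => phi_inj (congrArg Subtype.val h)
  set g : ℕ →o Ideal B := ⟨fun n => (f n).map ψ, fun m n h => Ideal.map_mono (hmono' m n h)⟩ with hg
  obtain ⟨N₁, hN₁⟩ := monotone_stabilizes_iff_noetherian.mpr inferInstance g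
  by_cases hall : ∀ n, f n = ⊥
  · exact ⟨0, fun n _ => by rw [hall n, hall 0]⟩
  push_neg at hall
  obtain ⟨n₀, hn₀⟩ := hall
  refine ⟨max N₁ n₀, fun n hn => ?_⟩
  set N := max N₁ n₀ with hN
  -- each step from N on is an equality
  have step : ∀ k, N ≤ k → f (k + 1) = f k := by
    intro k hk
    have hfk : f k ≠ ⊥ := fun h =>
      hn₀ (le_bot_iff.1 (h ▸ hmono' n₀ k (le_trans (le_max_right _ _) hk)))
    obtain ⟨b, hb⟩ := hprin k
    obtain ⟨a, ha⟩ := hprin (k + 1)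
    have hb0 : b ≠ 0 := by
      rintro rfl
      exact hfk (by rw [hb]; simp)
    have hbin : b ∈ f (k + 1) := hmono k (by rw [hb]; exact Ideal.subset_span (Set.mem_singleton b))
    have ha' : f (k + 1) = Ideal.span {a} := ha
    have hb' : f k = Ideal.span {b} := hb
    rw [ha'] at hbin
    obtain ⟨d, hd⟩ := Ideal.mem_span_singleton'.1 hbin
    -- b = d * a
    have hgk : g k = g (k + 1) := by
      rw [← hN₁ k (le_trans (le_max_left _ _) hk), ← hN₁ (k + 1)
        (le_trans (le_trans (le_max_left _ _) hk) (Nat.le_succ k))]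
    have hga : ψ a ∈ g k := by
      rw [hgk]
      exact Ideal.mem_map_of_mem ψ (by rw [ha]; exact Ideal.subset_span (Set.mem_singleton a))
    rw [hg] at hga
    change ψ a ∈ Ideal.map ψ (f k) at hga
    rw [hb', Ideal.map_span, Set.image_singleton, Ideal.mem_span_singleton'] at hga
    obtain ⟨c, hc⟩ := hga
    -- ψ a * (c * ψ d) ... ψ b = c * ψ a? hc : c * ψ b = ψ a
    have hψb0 : ψ b ≠ 0 := fun h => hb0 (hψinj (by rw [h, map_zero]))
    have hunit : IsUnit (ψ d) := by
      have h2 : c * ψ d = 1 := by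
        apply mul_right_cancel₀ hψb0
        rw [one_mul, mul_assoc, mul_comm (ψ d) (ψ b), ← mul_assoc, hc, ← map_mul,
          mul_comm a d, hd]
      exact IsUnit.of_mul_eq_one _ ((mul_comm c (ψ d)) ▸ h2)
    have hdnotM : d ∉ IsLocalRing.maximalIdeal D := by
      intro hdm
      have : ¬ IsUnit (ψ d) := (hB3 (ψ d)).2 ⟨d, hdm, rfl⟩
      exact this hunit
    have hdu : IsUnit d := notMem_maximalIdeal.1 hdnotM
    rw [ha', hb', ← hd]
    exact (Ideal.span_singleton_mul_left_unit hdu a).symm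
  -- conclude by induction
  have : ∀ j, f (N + j) = f N := by
    intro j
    induction j with
    | zero => rfl
    | succ j ih => rw [← Nat.add_assoc, step (N + j) (Nat.le_add_right _ _), ih]
  obtain ⟨j, rfl⟩ := Nat.exists_eq_add_of_le hn
  exact this j

theorem atomic_of_accp (hacc : HasACCP D) : IsAtomicDomain D := by
  have wf : WellFounded (α := {I : Ideal D // I.IsPrincipal}) (· > ·) := by
    rw [RelEmbedding.wellFounded_iff_isEmpty]
    refine ⟨fun e => ?_⟩
    set f : ℕ → Ideal D := fun n => (e n : {I : Ideal D // I.IsPrincipal}).1 with hf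
    have hp : ∀ n, (f n).IsPrincipal := fun n => (e n).2
    have hstrict : ∀ n, f n < f (n + 1) := fun n => e.map_rel_iff.2 (Nat.lt_succ_self n)
    have hmono : ∀ n, f n ≤ f (n + 1) := fun n => le_of_lt (hstrict n)
    obtain ⟨N, hN⟩ := hacc f hp hmono
    have h1 : f N < f (N + 1) := hstrict N
    rw [hN (N + 1) (Nat.le_succ N)] at h1
    exact lt_irrefl _ h1
  haveI : WfDvdMonoid D := WfDvdMonoid.of_setOf_isPrincipal_wellFoundedOn_gt wf
  intro x hx0 _
  exact WfDvdMonoid.exists_factors x hx0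

end FromDVR

theorem atomic_PVD_iff_ACCP_PVD_iff_MM_DVR (D : Type*) [CommRing D] [IsDomain D]
    [IsLocalRing D] (hnf : ¬ IsField D) :
    ((IsPVD D ∧ IsAtomicDomain D) ↔ (IsPVD D ∧ HasACCP D)) ∧
    ((IsPVD D ∧ IsAtomicDomain D) ↔ MMisDVR D) := by
  have hAC : (IsPVD D ∧ IsAtomicDomain D) → MMisDVR D :=
    fun ⟨hP, hA⟩ => mmisdvr_of_pvd_atomic hP hA hnf
  have hCA : MMisDVR D → IsPVD D ∧ IsAtomicDomain D :=
    fun hC => ⟨pvd_of_mmisdvr hC, atomic_of_accp (accp_of_mmisdvr hC)⟩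
  refine ⟨⟨fun h => ⟨h.1, accp_of_mmisdvr (hAC h)⟩, fun ⟨hP, hacc⟩ => ⟨hP, atomic_of_accp hacc⟩⟩,
    ⟨hAC, hCA⟩⟩
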